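/- Let m ≥ 1, let Z ⊆ [0,∞)^m be a nonempty finite set, and let v ∈ ℝ^m with v_j > 0 for all j. Define φ : ℝ^m → ℝ × ℝ^m by φ(z) = (1/(1+⟨v,z⟩), z/(1+⟨v,z⟩)). Then conv(φ(Z)) = {(ρ, y) ∈ ℝ × ℝ^m : ρ > 0, y/ρ ∈ conv(Z), ρ + ⟨v, y⟩ = 1}. (The perspective/projective convexification identity underlying the local sharpness of the perspective formulation.) -/

import Mathlib

open Finset

/-- **The perspective/projective convexification identity** underlying the local sharpness of
the perspective formulation.  For a nonempty finite set `Z ⊆ [0,∞)^m` and strictly positive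
`v`, with `φ(z) = (1/(1+⟨v,z⟩), z/(1+⟨v,z⟩))`, one has
`conv(φ(Z)) = {(ρ,y) : ρ > 0, y/ρ ∈ conv(Z), ρ + ⟨v,y⟩ = 1}`. -/
theorem perspective_convexification_identity
    (m : ℕ) (hm : 1 ≤ m)
    (Z : Set (Fin m → ℝ)) (hZne : Z.Nonempty) (hZfin : Z.Finite)
    (hZpos : ∀ z ∈ Z, ∀ j : Fin m, 0 ≤ z j)
    (v : Fin m → ℝ) (hv : ∀ j : Fin m, 0 < v j) :
    convexHull ℝ
        ((fun z : Fin m → ℝ =>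
          ((1 / (1 + ∑ j, v j * z j), (1 / (1 + ∑ j, v j * z j)) • z) :
            ℝ × (Fin m → ℝ))) '' Z)
      = {p : ℝ × (Fin m → ℝ) |
          0 < p.1 ∧ p.1⁻¹ • p.2 ∈ convexHull ℝ Z ∧
          p.1 + ∑ j, v j * p.2 j = 1} := by
  have key : ∀ z ∈ Z, 0 < 1 + ∑ j, v j * z j := by
    intro z hz
    have h0 : 0 ≤ ∑ j, v j * z j :=
      Finset.sum_nonneg fun j _ => mul_nonneg (hv j).le (hZpos z hz j)
    linarith
  apply Set.Subset.antisymm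
  · -- forward inclusion
    apply convexHull_min
    · rintro _ ⟨z, hz, rfl⟩
      have hpos := key z hz
      have hc : 0 < 1 / (1 + ∑ j, v j * z j) := by positivity
      refine ⟨hc, ?_, ?_⟩
      · show (1 / (1 + ∑ j, v j * z j))⁻¹ • ((1 / (1 + ∑ j, v j * z j)) • z) ∈ convexHull ℝ Z
        rw [smul_smul, inv_mul_cancel₀ (ne_of_gt hc), one_smul]
        exact subset_convexHull ℝ Z hz
      · simp only [Pi.smul_apply, smul_eq_mul]
        have hterm : ∑ j, v j * (1 / (1 + ∑ i, v i * z i) * z j)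
            = (1 / (1 + ∑ i, v i * z i)) * ∑ j, v j * z j := by
          rw [Finset.mul_sum]; exact Finset.sum_congr rfl fun j _ => by ring
        rw [hterm]
        field_simp
    · -- convexity of RHS
      rintro ⟨ρ₁, y₁⟩ ⟨hρ₁, hy₁, hs₁⟩ ⟨ρ₂, y₂⟩ ⟨hρ₂, hy₂, hs₂⟩ a b ha hb hab
      have hρ : 0 < a * ρ₁ + b * ρ₂ := by
        rcases eq_or_lt_of_le ha with h | h
        · have hb1 : b = 1 := by linarith
          simp [← h, hb1, hρ₂]
        · have h1 : 0 < a * ρ₁ := mul_pos h hρ₁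
          have h2 : 0 ≤ b * ρ₂ := mul_nonneg hb hρ₂.le
          linarith
      refine ⟨hρ, ?_, ?_⟩
      · -- membership
        have hρ₁0 : ρ₁ ≠ 0 := ne_of_gt hρ₁
        have hρ₂0 : ρ₂ ≠ 0 := ne_of_gt hρ₂
        have hρ0 : (a * ρ₁ + b * ρ₂) ≠ 0 := ne_of_gt hρ
        have hmem := (convex_convexHull ℝ Z) hy₁ hy₂
          (div_nonneg (mul_nonneg ha hρ₁.le) hρ.le)
          (div_nonneg (mul_nonneg hb hρ₂.le) hρ.le)
          (by field_simp)
        have heq : (a * ρ₁ / (a * ρ₁ + b * ρ₂)) • (ρ₁⁻¹ • y₁)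
            + (b * ρ₂ / (a * ρ₁ + b * ρ₂)) • (ρ₂⁻¹ • y₂)
            = (a * ρ₁ + b * ρ₂)⁻¹ • (a • y₁ + b • y₂) := by
          funext j
          simp only [Pi.add_apply, Pi.smul_apply, smul_eq_mul]
          field_simp
        rw [heq] at hmem
        simpa using hmem
      · -- affine constraint
        simp only [Prod.smul_mk, Prod.mk_add_mk, Pi.add_apply, Pi.smul_apply, smul_eq_mul]
        have hterm : ∑ j, v j * (a * y₁ j + b * y₂ j)
            = a * ∑ j, v j * y₁ j + b * ∑ j, v j * y₂ j := by
          rw [Finset.mul_sum, Finset.mul_sum, ← Finset.sum_add_distrib]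
          exact Finset.sum_congr rfl fun j _ => by ring
        rw [hterm]; nlinarith [hs₁, hs₂]
  · -- reverse inclusion
    rintro ⟨ρ, y⟩ ⟨hρ, hy, hs⟩
    simp only at hρ hy hs
    have hρ0 : ρ ≠ 0 := ne_of_gt hρ
    rw [_root_.convexHull_eq] at hy
    obtain ⟨ι, t, w, f, hw0, hw1, hfZ, hcm⟩ := hy
    rw [Finset.centerMass_eq_of_sum_1 _ _ hw1] at hcm
    have hyj : ∀ j, ∑ i ∈ t, w i * f i j = ρ⁻¹ * y j := by
      intro j
      have := congrFun hcm j
      simpa [Finset.sum_apply] using this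
    set w' : ι → ℝ := fun i => w i * (ρ * (1 + ∑ j, v j * f i j)) with hw'def
    have hw'0 : ∀ i ∈ t, 0 ≤ w' i := fun i hi =>
      mul_nonneg (hw0 i hi) (mul_nonneg hρ.le (key _ (hfZ i hi)).le)
    have hexp : ∀ i ∈ t, w' i = ρ * w i + ∑ j, ρ * (v j * (w i * f i j)) := by
      intro i _
      have : ∑ j, ρ * (v j * (w i * f i j)) = (ρ * w i) * ∑ j, v j * f i j := by
        rw [Finset.mul_sum]; exact Finset.sum_congr rfl fun j _ => by ring
      rw [this, hw'def]; ring
    have hjsum : ∀ j, ∑ i ∈ t, ρ * (v j * (w i * f i j)) = v j * y j := by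
      intro j
      have h1 : ∑ i ∈ t, ρ * (v j * (w i * f i j)) = ρ * v j * ∑ i ∈ t, w i * f i j := by
        rw [Finset.mul_sum]; exact Finset.sum_congr rfl fun i _ => by ring
      rw [h1, hyj j]
      field_simp
    have hsum1 : ∑ i ∈ t, w' i = 1 := by
      rw [Finset.sum_congr rfl hexp, Finset.sum_add_distrib, ← Finset.mul_sum, hw1,
        Finset.sum_comm]
      rw [Finset.sum_congr rfl (fun j _ => hjsum j)]
      linarith [hs]
    have himg : ∀ i ∈ t, (fun z : Fin m → ℝ =>
          ((1 / (1 + ∑ j, v j * z j), (1 / (1 + ∑ j, v j * z j)) • z) :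
            ℝ × (Fin m → ℝ))) (f i)
        ∈ (fun z : Fin m → ℝ =>
          ((1 / (1 + ∑ j, v j * z j), (1 / (1 + ∑ j, v j * z j)) • z) :
            ℝ × (Fin m → ℝ))) '' Z :=
      fun i hi => Set.mem_image_of_mem _ (hfZ i hi)
    have hmem := Finset.centerMass_mem_convexHull t hw'0 (by rw [hsum1]; norm_num) himg
    rw [Finset.centerMass_eq_of_sum_1 _ _ hsum1] at hmem
    have hfin : (∑ i ∈ t, w' i • ((fun z : Fin m → ℝ =>
          ((1 / (1 + ∑ j, v j * z j), (1 / (1 + ∑ j, v j * z j)) • z) :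
            ℝ × (Fin m → ℝ))) (f i))) = (ρ, y) := by
      have hcoef : ∀ i ∈ t, w' i * (1 / (1 + ∑ j, v j * f i j)) = ρ * w i := by
        intro i hi
        have hp := key _ (hfZ i hi)
        rw [hw'def]
        field_simp
      refine Prod.ext ?_ ?_
      · simp only [Prod.fst_sum, Prod.smul_mk, smul_eq_mul, Prod.mk.injEq]
        calc ∑ i ∈ t, w' i * (1 / (1 + ∑ j, v j * f i j))
            = ∑ i ∈ t, ρ * w i := Finset.sum_congr rfl hcoef
          _ = ρ := by rw [← Finset.mul_sum, hw1, mul_one]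
      · funext j
        simp only [Prod.snd_sum, Prod.smul_mk, Finset.sum_apply, Pi.smul_apply, smul_eq_mul]
        calc ∑ i ∈ t, w' i * (1 / (1 + ∑ k, v k * f i k) * f i j)
            = ∑ i ∈ t, ρ * (w i * f i j) := by
              refine Finset.sum_congr rfl fun i hi => ?_
              have := hcoef i hi
              calc w' i * (1 / (1 + ∑ k, v k * f i k) * f i j)
                  = (w' i * (1 / (1 + ∑ k, v k * f i k))) * f i j := by ring
                _ = ρ * (w i * f i j) := by rw [this]; ring
          _ = ρ * ∑ i ∈ t, w i * f i j := by rw [Finset.mul_sum]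
          _ = y j := by rw [hyj j]; field_simp
    rw [hfin] at hmem
    exact hmem
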